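/- Let Ω ⊂ ℝ^d (d ≥ 1) be a bounded Lebesgue-measurable set with |Ω| > 0, equipped with Lebesgue measure, let γ ∈ (0,1), let d′ ≥ 1, let ρ ∈ C_γ, and let u ∈ L²(Ω)^{d′}. Suppose the set S := {x ∈ Ω : u(x) = 0 and ρ(x) > 0} has positive Lebesgue measure. Then for every ε > 0 there exists η ∈ C_γ such that: η differs from ρ on a set of positive measure; ‖η − ρ‖_{L²(Ω)} < ε; η = ρ a.e. on Ω \ S; and α(η(x))|u(x)|² = α(ρ(x))|u(x)|² for a.e. x ∈ Ω, for every function α : [0,1] → ℝ. In particular, for every bounded measurable α : [0,1] → ℝ, ∫_Ω α(η)|u|² dx = ∫_Ω α(ρ)|u|² dx, so ρ is not a strict minimizer of η ↦ ∫_Ω α(η)|u|² dx over C_γ with respect to the L²(Ω)-norm. -/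

import Mathlib

open MeasureTheory

set_option maxHeartbeats 1000000 in
/-- Perturbation construction underlying `supp(ρ) ⊆ supp(u)` for strict minimizers:
if `ρ ∈ C_γ` has positive mass on the set `S = {x ∈ Ω : u(x) = 0, ρ(x) > 0}` where
`u ∈ L²(Ω)^{d'}` vanishes, then for every `ε > 0` there is `η ∈ C_γ` differing from `ρ`
on a set of positive measure, with `‖η − ρ‖_{L²(Ω)} < ε`, `η = ρ` a.e. on `Ω \ S`, and
`α(η)|u|² = α(ρ)|u|²` a.e. in `Ω` for every `α`; in particular the integrals
`∫_Ω α(η)|u|² dx` and `∫_Ω α(ρ)|u|² dx` coincide for every bounded measurable `α`. -/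
theorem perturbation_on_zero_velocity_set
    {d d' : ℕ} (hd : 1 ≤ d) (hd' : 1 ≤ d')
    (Ω : Set (Fin d → ℝ)) (hΩmeas : MeasurableSet Ω)
    (hΩbdd : Bornology.IsBounded Ω) (hΩpos : 0 < volume Ω)
    (γ : ℝ) (hγ : γ ∈ Set.Ioo (0 : ℝ) 1)
    (ρ : (Fin d → ℝ) → ℝ) (hρmeas : Measurable ρ)
    (hρ01 : ∀ᵐ x ∂(volume.restrict Ω), ρ x ∈ Set.Icc (0 : ℝ) 1)
    (hρvol : (∫ x in Ω, ρ x) ≤ γ * (volume Ω).toReal)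
    (u : (Fin d → ℝ) → EuclideanSpace ℝ (Fin d'))
    (hu : MemLp u 2 (volume.restrict Ω))
    -- S = {x ∈ Ω : u(x) = 0 and ρ(x) > 0} has positive measure
    (hS : 0 < volume {x ∈ Ω | u x = 0 ∧ 0 < ρ x}) :
    ∀ ε > (0 : ℝ), ∃ η : (Fin d → ℝ) → ℝ,
      -- η ∈ C_γ
      Measurable η ∧
      (∀ᵐ x ∂(volume.restrict Ω), η x ∈ Set.Icc (0 : ℝ) 1) ∧
      (∫ x in Ω, η x) ≤ γ * (volume Ω).toReal ∧
      -- η differs from ρ on a set of positive measure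
      0 < volume {x ∈ Ω | η x ≠ ρ x} ∧
      -- ‖η − ρ‖_{L²(Ω)} < ε
      Real.sqrt (∫ x in Ω, (η x - ρ x) ^ 2) < ε ∧
      -- η = ρ a.e. on Ω \ S
      (∀ᵐ x ∂(volume.restrict (Ω \ {x ∈ Ω | u x = 0 ∧ 0 < ρ x})), η x = ρ x) ∧
      -- α(η)|u|² = α(ρ)|u|² a.e. in Ω, for every function α
      (∀ α : ℝ → ℝ, ∀ᵐ x ∂(volume.restrict Ω),
        α (η x) * ‖u x‖ ^ 2 = α (ρ x) * ‖u x‖ ^ 2) ∧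
      -- in particular, the objective value is unchanged for bounded measurable α
      (∀ α : ℝ → ℝ, Measurable α → (∃ C : ℝ, ∀ y, |α y| ≤ C) →
        (∫ x in Ω, α (η x) * ‖u x‖ ^ 2) = ∫ x in Ω, α (ρ x) * ‖u x‖ ^ 2) := by
  intro ε hε
  have hΩfin : volume Ω < ⊤ := hΩbdd.measure_lt_top
  haveI : IsFiniteMeasure (volume.restrict Ω) :=
    ⟨by rw [Measure.restrict_apply_univ]; exact hΩfin⟩
  -- measurable version of u
  obtain ⟨g, hgsm, hug⟩ := hu.aestronglyMeasurable
  have hgmeas : Measurable g := hgsm.measurable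
  set S : Set (Fin d → ℝ) := {x ∈ Ω | u x = 0 ∧ 0 < ρ x} with hSdef
  set T : Set (Fin d → ℝ) := Ω ∩ (g ⁻¹' {0}) ∩ {x | 0 < ρ x} with hTdef
  have hTmeas : MeasurableSet T :=
    (hΩmeas.inter (hgmeas (measurableSet_singleton 0))).inter
      (measurableSet_lt measurable_const hρmeas)
  -- null set where u ≠ g inside Ω
  have hug' : ∀ᵐ x ∂(volume : Measure (Fin d → ℝ)), x ∈ Ω → u x = g x :=
    (ae_restrict_iff' hΩmeas).mp hug
  have hnull : volume {x | x ∈ Ω ∧ u x ≠ g x} = 0 := by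
    have := hug'
    rw [MeasureTheory.ae_iff] at this
    refine measure_mono_null ?_ this
    intro x hx
    simp only [Set.mem_setOf_eq] at *
    tauto
  -- T has positive measure
  have hTpos : 0 < volume T := by
    by_contra h
    push_neg at h
    have hT0 : volume T = 0 := le_antisymm h bot_le
    have : volume S ≤ volume T + volume {x | x ∈ Ω ∧ u x ≠ g x} := by
      refine le_trans (measure_mono ?_) (measure_union_le _ _)
      intro x hx
      obtain ⟨hxΩ, hxu, hxρ⟩ := hx
      by_cases hxg : u x = g x
      · left; exact ⟨⟨hxΩ, by simp [← hxg, hxu]⟩, hxρ⟩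
      · right; exact ⟨hxΩ, hxg⟩
    rw [hT0, hnull] at this
    simp at this
    exact absurd this (by exact hS.ne')
  set V : ℝ := (volume Ω).toReal with hV
  have hV0 : 0 ≤ V := ENNReal.toReal_nonneg
  -- the scaling parameter
  set t : ℝ := min (1/2) (ε / (2 * (Real.sqrt V + 1))) with ht
  have hsq : 0 < Real.sqrt V + 1 := by positivity
  have ht0 : 0 < t := lt_min (by norm_num) (by positivity)
  have ht1 : t ≤ 1/2 := min_le_left _ _
  have htε : t * Real.sqrt V < ε := by
    calc t * Real.sqrt V ≤ (ε / (2 * (Real.sqrt V + 1))) * Real.sqrt V := by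
          apply mul_le_mul_of_nonneg_right (min_le_right _ _) (Real.sqrt_nonneg _)
      _ < ε := by
          rw [div_mul_eq_mul_div, div_lt_iff₀ (by positivity)]
          nlinarith [Real.sqrt_nonneg V]
  -- the perturbation
  refine ⟨fun x => ρ x - t * T.indicator ρ x, ?_, ?_, ?_, ?_, ?_, ?_, ?_, ?_⟩
  · exact hρmeas.sub ((measurable_const.mul (hρmeas.indicator hTmeas)))
  · -- range in [0,1]
    filter_upwards [hρ01] with x hx
    by_cases hxT : x ∈ T
    · rw [Set.indicator_of_mem hxT]
      constructor
      · nlinarith [hx.1, hx.2]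
      · nlinarith [hx.1, hx.2]
    · rw [Set.indicator_of_notMem hxT]
      simpa using hx
  · -- integral constraint
    have hρint : IntegrableOn ρ Ω := by
      refine Integrable.mono' (integrable_const (1 : ℝ)) (hρmeas.aestronglyMeasurable) ?_
      filter_upwards [hρ01] with x hx
      rw [Real.norm_eq_abs, abs_le]; exact ⟨by linarith [hx.1], hx.2⟩
    have hηint : IntegrableOn (fun x => ρ x - t * T.indicator ρ x) Ω := by
      refine hρint.sub ?_
      refine Integrable.mono' (integrable_const (1 : ℝ))
        ((measurable_const.mul (hρmeas.indicator hTmeas)).aestronglyMeasurable) ?_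
      filter_upwards [hρ01] with x hx
      rw [Real.norm_eq_abs, abs_le]
      by_cases hxT : x ∈ T
      · rw [Set.indicator_of_mem hxT]
        constructor <;> nlinarith [hx.1, hx.2]
      · rw [Set.indicator_of_notMem hxT]; norm_num
    refine le_trans (integral_mono_ae hηint hρint ?_) hρvol
    filter_upwards [hρ01] with x hx
    by_cases hxT : x ∈ T
    · rw [Set.indicator_of_mem hxT]; nlinarith [hx.1]
    · rw [Set.indicator_of_notMem hxT]; simp
  · -- differs on positive measure
    refine lt_of_lt_of_le hTpos (measure_mono ?_)
    intro x hx
    obtain ⟨⟨hxΩ, hxg⟩, hxρ⟩ := hx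
    simp only [Set.mem_setOf_eq]
    refine ⟨hxΩ, ?_⟩
    simp only [Set.indicator_of_mem (show x ∈ T from ⟨⟨hxΩ, hxg⟩, hxρ⟩)]
    intro h
    have h2 : t * ρ x = 0 := by linarith
    rcases mul_eq_zero.mp h2 with h' | h'
    · exact absurd h' ht0.ne'
    · exact absurd h' (ne_of_gt hxρ)
  · -- L² bound
    have hle : (∫ x in Ω, (ρ x - t * T.indicator ρ x - ρ x) ^ 2) ≤ t ^ 2 * V := by
      have : (∫ x in Ω, t ^ 2) = t ^ 2 * V := by
        rw [setIntegral_const, smul_eq_mul, mul_comm, measureReal_def]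
      rw [← this]
      refine integral_mono_ae ?_ (integrable_const _) ?_
      · refine Integrable.mono' (integrable_const (t ^ 2)) ?_ ?_
        · exact ((hρmeas.sub (measurable_const.mul (hρmeas.indicator hTmeas))).sub
            hρmeas).pow_const 2 |>.aestronglyMeasurable
        · filter_upwards [hρ01] with x hx
          rw [Real.norm_eq_abs, abs_le]
          by_cases hxT : x ∈ T
          · rw [Set.indicator_of_mem hxT]
            have he : (ρ x - t * ρ x - ρ x) ^ 2 = t ^ 2 * ρ x ^ 2 := by ring
            rw [he]
            have h1 : ρ x ^ 2 ≤ 1 := by nlinarith [hx.1, hx.2]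
            constructor
            · nlinarith [sq_nonneg t, sq_nonneg (ρ x)]
            · nlinarith [sq_nonneg t]
          · rw [Set.indicator_of_notMem hxT]
            constructor
            · nlinarith [sq_nonneg t]
            · nlinarith [sq_nonneg t]
      · filter_upwards [hρ01] with x hx
        by_cases hxT : x ∈ T
        · rw [Set.indicator_of_mem hxT]
          have he : (ρ x - t * ρ x - ρ x) ^ 2 = t ^ 2 * ρ x ^ 2 := by ring
          rw [he]
          have h1 : ρ x ^ 2 ≤ 1 := by nlinarith [hx.1, hx.2]
          nlinarith [sq_nonneg t]
        · rw [Set.indicator_of_notMem hxT]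
          nlinarith [sq_nonneg t]
    calc Real.sqrt (∫ x in Ω, (ρ x - t * T.indicator ρ x - ρ x) ^ 2)
        ≤ Real.sqrt (t ^ 2 * V) := Real.sqrt_le_sqrt hle
      _ = t * Real.sqrt V := by
          rw [Real.sqrt_mul (sq_nonneg t), Real.sqrt_sq ht0.le]
      _ < ε := htε
  · -- η = ρ a.e. off S
    have hkey : (volume.restrict (Ω \ S)) T = 0 := by
      rw [Measure.restrict_apply hTmeas]
      refine measure_mono_null ?_ hnull
      intro x hx
      obtain ⟨⟨⟨hxΩ, hxg⟩, hxρ⟩, _, hxS⟩ := hx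
      refine ⟨hxΩ, ?_⟩
      intro h
      refine hxS ⟨hxΩ, ?_, hxρ⟩
      rw [h]; exact hxg
    rw [MeasureTheory.ae_iff]
    refine measure_mono_null ?_ hkey
    intro x hx
    simp only [Set.mem_setOf_eq] at hx
    by_contra hxT
    exact hx (by rw [Set.indicator_of_notMem hxT]; ring)
  · -- pointwise α equality
    intro α
    filter_upwards [hug] with x hx
    by_cases hxT : x ∈ T
    · have : u x = 0 := by rw [hx]; exact hxT.1.2
      simp [this]
    · rw [Set.indicator_of_notMem hxT]; ring_nf
  · -- integral equality
    intro α hα hbdd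
    refine integral_congr_ae ?_
    filter_upwards [hug] with x hx
    by_cases hxT : x ∈ T
    · have : u x = 0 := by rw [hx]; exact hxT.1.2
      simp [this]
    · rw [Set.indicator_of_notMem hxT]; ring_nf
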